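/- If P_0,...,P_4 are nonzero projections on a 3-dimensional Hilbert space with P_i P_{i+1} = 0 for all i mod 5, then rank(P_0) + rank(P_1) + rank(P_2) + rank(P_3) + rank(P_4) ≤ 6. -/

import Mathlib

open Submodule Module

section Aux

variable {H : Type*} [NormedAddCommGroup H] [InnerProductSpace ℂ H]

lemma aux_orth_symm (A B : Submodule ℂ H) (h : A ≤ Bᗮ) : B ≤ Aᗮ := by
  intro b hb
  rw [Submodule.mem_orthogonal]
  intro a ha
  have := h ha
  rw [Submodule.mem_orthogonal] at this
  have h2 := this b hb
  simpa [inner_eq_zero_symm] using h2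

end Aux

/-- For nonzero projections `P₀, …, P₄` on a 3-dimensional Hilbert space with
`Pᵢ P_{i+1} = 0` (indices mod 5), the ranks sum to at most `6`. -/
theorem kcbs_rank_sum_le_six
    {H : Type*} [NormedAddCommGroup H] [InnerProductSpace ℂ H]
    [FiniteDimensional ℂ H] (hdim : Module.finrank ℂ H = 3)
    (P : Fin 5 → (H →L[ℂ] H))
    (hne : ∀ i, P i ≠ 0)
    (hsa : ∀ i, IsSelfAdjoint (P i))
    (hidem : ∀ i, P i * P i = P i)
    (horth : ∀ i, P i * P (i + 1) = 0) :
    ∑ i : Fin 5, Module.finrank ℂ (LinearMap.range (P i : H →ₗ[ℂ] H)) ≤ 6 := by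
  set V : Fin 5 → Submodule ℂ H := fun i => LinearMap.range (P i : H →ₗ[ℂ] H) with hV
  show ∑ i : Fin 5, finrank ℂ (V i) ≤ 6
  -- ranges are orthogonal in both directions
  have hsymm : ∀ i, ((P i : H →ₗ[ℂ] H)).IsSymmetric := fun i =>
    (ContinuousLinearMap.isSelfAdjoint_iff_isSymmetric).mp (hsa i)
  have horth' : ∀ i, V (i + 1) ≤ (V i)ᗮ := by
    intro i y hy
    obtain ⟨x, rfl⟩ := hy
    rw [Submodule.mem_orthogonal]
    rintro u ⟨z, rfl⟩
    have h0 : P i (P (i + 1) x) = 0 := by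
      have := congrArg (fun T => T x) (horth i)
      simpa using this
    calc (inner ℂ ((P i : H →ₗ[ℂ] H) z) ((P (i+1) : H →ₗ[ℂ] H) x) : ℂ)
        = inner ℂ z ((P i : H →ₗ[ℂ] H) ((P (i+1) : H →ₗ[ℂ] H) x)) := hsymm i z _
      _ = 0 := by simp [h0]
  have horth'' : ∀ i, V i ≤ (V (i + 1))ᗮ := fun i => aux_orth_symm _ _ (horth' i)
  -- ranks are positive
  have hpos : ∀ i, 1 ≤ finrank ℂ (V i) := by
    intro i
    rw [Nat.one_le_iff_ne_zero]
    intro h0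
    have : V i = ⊥ := Submodule.finrank_eq_zero.mp h0
    apply hne i
    ext x
    have : (P i : H →ₗ[ℂ] H) x ∈ V i := ⟨x, rfl⟩
    rw [‹V i = ⊥›] at this
    simpa using this
  have hperp : ∀ i, finrank ℂ (V i) + finrank ℂ ((V i)ᗮ) = 3 := by
    intro i
    rw [← hdim]
    exact Submodule.finrank_add_finrank_orthogonal _
  have hadj : ∀ i, finrank ℂ (V i) + finrank ℂ (V (i + 1)) ≤ 3 := by
    intro i
    have := Submodule.finrank_mono (horth' i)
    calc finrank ℂ (V i) + finrank ℂ (V (i + 1)) ≤ finrank ℂ (V i) + finrank ℂ ((V i)ᗮ) := by omega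
      _ = 3 := hperp i
  -- main case: some rank equals 2
  have hcase2 : ∀ i, finrank ℂ (V i) = 2 → ∑ j : Fin 5, finrank ℂ (V j) ≤ 6 := by
    intro i h2
    have hperp1 : finrank ℂ ((V i)ᗮ) = 1 := by have := hperp i; omega
    -- V (i+1) and V (i+4) both equal (V i)ᗮ
    have he1 : V (i + 1) = (V i)ᗮ := by
      apply Submodule.eq_of_le_of_finrank_eq (horth' i)
      have hle := Submodule.finrank_mono (horth' i)
      have := hpos (i + 1)
      omega
    have h41 : (4 : Fin 5) + 1 = 0 := rfl
    have hi4 : (i + 4) + 1 = i := by rw [add_assoc, h41, add_zero]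
    have he4 : V (i + 4) = (V i)ᗮ := by
      have h := horth'' (i + 4)
      rw [hi4] at h
      apply Submodule.eq_of_le_of_finrank_eq h
      have hle := Submodule.finrank_mono h
      have := hpos (i + 4)
      omega
    have hr1 : finrank ℂ (V (i + 1)) = 1 := by rw [he1]; exact hperp1
    have hr4 : finrank ℂ (V (i + 4)) = 1 := by rw [he4]; exact hperp1
    -- V(i+2) and V(i+3) are orthogonal subspaces of (V(i+4))ᗮ
    have h2le : V (i + 2) ≤ (V (i + 4))ᗮ := by
      rw [he4, ← he1]
      have h := horth' (i + 1)
      have e11 : (1 : Fin 5) + 1 = 2 := rfl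
      have h11 : i + 1 + 1 = i + 2 := by rw [add_assoc, e11]
      rwa [h11] at h
    have h31 : (3 : Fin 5) + 1 = 4 := rfl
    have hi3 : (i + 3) + 1 = i + 4 := by rw [add_assoc, h31]
    have h3le : V (i + 3) ≤ (V (i + 4))ᗮ := by
      have h := horth'' (i + 3); rwa [hi3] at h
    have hsup : V (i + 2) ⊔ V (i + 3) ≤ (V (i + 4))ᗮ := sup_le h2le h3le
    have hinf : V (i + 2) ⊓ V (i + 3) = ⊥ := by
      have h := horth' (i + 2)
      have e21 : (2 : Fin 5) + 1 = 3 := rfl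
      have h21 : i + 2 + 1 = i + 3 := by rw [add_assoc, e21]
      rw [h21] at h
      have : V (i + 2) ⊓ V (i + 3) ≤ V (i + 2) ⊓ (V (i + 2))ᗮ :=
        inf_le_inf le_rfl h
      rw [Submodule.inf_orthogonal_eq_bot] at this
      exact le_bot_iff.mp this
    have hdimperp4 : finrank ℂ ((V (i + 4))ᗮ) = 2 := by
      have h := hperp (i + 4); rw [hr4] at h; omega
    have h23 : finrank ℂ (V (i + 2)) + finrank ℂ (V (i + 3)) ≤ 2 := by
      have hs := Submodule.finrank_sup_add_finrank_inf_eq (V (i + 2)) (V (i + 3))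
      rw [hinf, finrank_bot] at hs
      have hle := Submodule.finrank_mono hsup
      rw [hdimperp4] at hle
      omega
    -- reindex the sum
    have hsum : ∑ j : Fin 5, finrank ℂ (V j) = ∑ j : Fin 5, finrank ℂ (V (i + j)) :=
      (Fintype.sum_equiv (Equiv.addLeft i) _ _ (fun j => rfl)).symm
    rw [hsum]
    simp only [Fin.sum_univ_five]
    have hz : finrank ℂ (V (i + 0)) = 2 := by rw [add_zero]; exact h2
    omega
  -- conclude
  by_cases hex : ∃ i, finrank ℂ (V i) = 2
  · obtain ⟨i, hi⟩ := hex
    exact hcase2 i hi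
  · push_neg at hex
    have hle1 : ∀ i, finrank ℂ (V i) ≤ 1 := by
      intro i
      have h1 := hadj i
      have h2 := hpos (i + 1)
      have h3 := hex i
      omega
    rw [Fin.sum_univ_five]
    have := hle1 0; have := hle1 1; have := hle1 2; have := hle1 3; have := hle1 4
    omega
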